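/- For d ≥ 2 and H_a(X) = a^d e^{(1-a²)X} + e^{(1-a^{-2})X} - (1+a^d) with unique positive zero X_a: lim_{a→1⁺} X_a = d/2 + 1. -/

import Mathlib

open Real

section Aux
open Filter Topology

private lemma convexOn_exp_mul (c : ℝ) : ConvexOn ℝ Set.univ (fun x : ℝ => Real.exp (c * x)) := by
  refine ⟨convex_univ, fun x _ y _ μ ν hμ hν hs => ?_⟩
  have := convexOn_exp.2 (Set.mem_univ (c*x)) (Set.mem_univ (c*y)) hμ hν hs
  simpa [smul_eq_mul, mul_add, mul_comm, mul_left_comm] using this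

private lemma convexOn_H (d : ℕ) (a : ℝ) (ha : 0 ≤ a) :
    ConvexOn ℝ Set.univ (fun y : ℝ => a ^ d * Real.exp ((1 - a ^ 2) * y)
      + Real.exp ((1 - (a ^ 2)⁻¹) * y) - (1 + a ^ d)) := by
  have h1 := (convexOn_exp_mul (1 - a ^ 2)).smul (pow_nonneg ha d)
  have h2 := h1.add (convexOn_exp_mul (1 - (a ^ 2)⁻¹))
  have h3 := h2.add_const (-(1 + a ^ d))
  refine h3.congr (fun y _ => ?_)
  simp only [Pi.add_apply, smul_eq_mul]
  ring

private lemma convex_trap {g : ℝ → ℝ} (hg : ConvexOn ℝ Set.univ g) {p : ℝ}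
    (h0 : g 0 = 0) (hp : g p = 0) (hp0 : 0 < p) :
    (∀ y, 0 ≤ y → y ≤ p → g y ≤ 0) ∧ (∀ y, p ≤ y → 0 ≤ g y) := by
  constructor
  · intro y hy0 hyp
    have hμ : 0 ≤ (p - y)/p := div_nonneg (by linarith) hp0.le
    have hν : 0 ≤ y/p := div_nonneg hy0 hp0.le
    have hsum : (p - y)/p + y/p = 1 := by field_simp; ring
    have := hg.2 (Set.mem_univ 0) (Set.mem_univ p) hμ hν hsum
    have hpt : ((p - y)/p) • (0:ℝ) + (y/p) • p = y := by
      rw [smul_eq_mul, smul_eq_mul, mul_zero, zero_add, div_mul_cancel₀ _ hp0.ne']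
    rw [hpt, h0, hp] at this
    simpa using this
  · intro y hyp
    have hy0 : 0 < y := lt_of_lt_of_le hp0 hyp
    have hμ : 0 ≤ (y - p)/y := div_nonneg (by linarith) hy0.le
    have hν : 0 ≤ p/y := div_nonneg hp0.le hy0.le
    have hsum : (y - p)/y + p/y = 1 := by field_simp; ring
    have := hg.2 (Set.mem_univ 0) (Set.mem_univ y) hμ hν hsum
    have hpt : ((y - p)/y) • (0:ℝ) + (p/y) • y = p := by
      rw [smul_eq_mul, smul_eq_mul, mul_zero, zero_add, div_mul_cancel₀ _ hy0.ne']
    rw [hpt, hp, h0] at this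
    simp only [smul_eq_mul, mul_zero, zero_add] at this
    nlinarith [div_pos hp0 hy0]

private lemma tendsto_expQuad :
    Tendsto (fun u : ℝ => (Real.exp u - 1 - u) / u ^ 2) (𝓝[≠] (0:ℝ)) (𝓝 (1/2)) := by
  rw [← tendsto_sub_nhds_zero_iff]
  apply squeeze_zero_norm' (a := fun u : ℝ => |u| * (2/9))
  · have h1 : ∀ᶠ u : ℝ in 𝓝[≠] (0:ℝ), |u| ≤ 1 := by
      apply eventually_nhdsWithin_of_eventually_nhds
      have : Metric.closedBall (0:ℝ) 1 ∈ 𝓝 (0:ℝ) := Metric.closedBall_mem_nhds 0 one_pos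
      filter_upwards [this] with u hu
      simpa [Real.dist_eq] using hu
    filter_upwards [h1, self_mem_nhdsWithin] with u hu hu0
    have hu0' : u ≠ 0 := hu0
    have hb := Real.exp_bound hu (n := 3) (by norm_num)
    have hsum : (∑ m ∈ Finset.range 3, u ^ m / (m.factorial : ℝ)) = 1 + u + u^2/2 := by
      simp [Finset.sum_range_succ, Nat.factorial]
    rw [hsum] at hb
    have key : (Real.exp u - 1 - u) / u ^ 2 - 1/2 = (Real.exp u - (1 + u + u^2/2)) / u^2 := by
      field_simp
      ring
    rw [key]
    have hu2 : (0:ℝ) < u^2 := by positivity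
    rw [Real.norm_eq_abs, abs_div, abs_of_pos hu2, div_le_iff₀ hu2]
    calc |Real.exp u - (1 + u + u^2/2)| ≤ |u|^3 * ((3:ℕ).succ / ((3:ℕ).factorial * 3)) := hb
      _ = |u| * (2/9) * u^2 := by
          rw [show ((3:ℕ).succ : ℝ) / ((3:ℕ).factorial * 3) = 2/9 by norm_num [Nat.factorial]]
          rw [← abs_pow]
          rw [show |u^3| = |u| * u^2 by rw [pow_succ' u 2, abs_mul, abs_of_pos (by positivity : (0:ℝ) < u^2)]  ]
          ring
  · have : Tendsto (fun u : ℝ => |u| * (2/9)) (𝓝 0) (𝓝 (|0| * (2/9))) := by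
      exact (continuous_abs.tendsto 0).mul_const _
    simpa using this.mono_left nhdsWithin_le_nhds


private lemma tendsto_ratio (d : ℕ) (y : ℝ) (hy : 0 < y) :
    Tendsto (fun a : ℝ => (a ^ d * Real.exp ((1 - a ^ 2) * y) + Real.exp ((1 - (a ^ 2)⁻¹) * y)
      - (1 + a ^ d)) / (a ^ 2 - 1) ^ 2) (𝓝[>] (1:ℝ)) (𝓝 (y^2 - ((d:ℝ)/2 + 1) * y)) := by
  have h1 : Tendsto (fun a : ℝ => (1 - a ^ 2) * y) (𝓝[>] (1:ℝ)) (𝓝[≠] (0:ℝ)) := by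
    rw [tendsto_nhdsWithin_iff]
    constructor
    · have : Tendsto (fun a : ℝ => (1 - a ^ 2) * y) (𝓝 1) (𝓝 ((1 - 1 ^ 2) * y)) :=
        Continuous.tendsto (by fun_prop) 1
      simpa using this.mono_left nhdsWithin_le_nhds
    · filter_upwards [self_mem_nhdsWithin] with a (ha : 1 < a)
      have : a ^ 2 > 1 := by nlinarith
      have : (1 - a ^ 2) * y < 0 := mul_neg_of_neg_of_pos (by linarith) hy
      exact ne_of_lt this
  have h2 : Tendsto (fun a : ℝ => (1 - (a ^ 2)⁻¹) * y) (𝓝[>] (1:ℝ)) (𝓝[≠] (0:ℝ)) := by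
    rw [tendsto_nhdsWithin_iff]
    constructor
    · have : Tendsto (fun a : ℝ => (1 - (a ^ 2)⁻¹) * y) (𝓝 1) (𝓝 ((1 - ((1:ℝ) ^ 2)⁻¹) * y)) := by
        apply Tendsto.mul _ tendsto_const_nhds
        apply Tendsto.sub tendsto_const_nhds
        exact ((continuous_pow 2).tendsto 1).inv₀ (by norm_num)
      simpa using this.mono_left nhdsWithin_le_nhds
    · filter_upwards [self_mem_nhdsWithin] with a (ha : 1 < a)
      have h2' : a ^ 2 > 1 := by nlinarith
      have : (0:ℝ) < 1 - (a ^ 2)⁻¹ := by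
        have : (a ^ 2)⁻¹ < 1 := by
          rw [inv_lt_one_iff₀]; right; exact h2'
        linarith
      exact (mul_pos this hy).ne'
  have hQ1 := tendsto_expQuad.comp h1
  have hQ2 := tendsto_expQuad.comp h2
  have hpow : Tendsto (fun a : ℝ => a ^ d) (𝓝[>] (1:ℝ)) (𝓝 1) := by
    have : Tendsto (fun a : ℝ => a ^ d) (𝓝 1) (𝓝 (1 ^ d)) := (continuous_pow d).tendsto 1
    simpa using this.mono_left nhdsWithin_le_nhds
  have hquot : Tendsto (fun a : ℝ => y ^ 2 / (a ^ 2) ^ 2) (𝓝[>] (1:ℝ)) (𝓝 (y ^ 2)) := by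
    have : Tendsto (fun a : ℝ => y ^ 2 / (a ^ 2) ^ 2) (𝓝 1) (𝓝 (y ^ 2 / ((1:ℝ) ^ 2) ^ 2)) := by
      exact Tendsto.div tendsto_const_nhds (Continuous.tendsto (by fun_prop) 1) (by norm_num)
    simpa using this.mono_left nhdsWithin_le_nhds
  have hsum : Tendsto (fun a : ℝ => y * (∑ i ∈ Finset.range (d + 2), a ^ i) / ((a + 1) * a ^ 2))
      (𝓝[>] (1:ℝ)) (𝓝 (y * (d + 2) / 2)) := by
    have : Tendsto (fun a : ℝ => y * (∑ i ∈ Finset.range (d + 2), a ^ i) / ((a + 1) * a ^ 2))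
        (𝓝 1) (𝓝 (y * (∑ i ∈ Finset.range (d + 2), (1:ℝ) ^ i) / (((1:ℝ) + 1) * 1 ^ 2))) := by
      exact Tendsto.div (Continuous.tendsto (by fun_prop) 1) (Continuous.tendsto (by fun_prop) 1) (by norm_num)
    simp only [one_pow, Finset.sum_const, Finset.card_range, smul_eq_mul, mul_one] at this
    convert this.mono_left nhdsWithin_le_nhds using 2
    push_cast; ring
  have heq : ∀ᶠ a in 𝓝[>] (1:ℝ),
      (fun a : ℝ => a ^ d * ((Real.exp ((1 - a ^ 2) * y) - 1 - (1 - a ^ 2) * y) / ((1 - a ^ 2) * y) ^ 2) * y ^ 2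
        + (Real.exp ((1 - (a ^ 2)⁻¹) * y) - 1 - (1 - (a ^ 2)⁻¹) * y) / ((1 - (a ^ 2)⁻¹) * y) ^ 2 * (y ^ 2 / (a ^ 2) ^ 2)
        - y * (∑ i ∈ Finset.range (d + 2), a ^ i) / ((a + 1) * a ^ 2)) a
      = (a ^ d * Real.exp ((1 - a ^ 2) * y) + Real.exp ((1 - (a ^ 2)⁻¹) * y)
        - (1 + a ^ d)) / (a ^ 2 - 1) ^ 2 := by
    filter_upwards [self_mem_nhdsWithin] with a (ha : 1 < a)
    have ha0 : (0:ℝ) < a := by linarith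
    have ha1 : a ≠ 1 := ne_of_gt ha
    have ha2 : (1:ℝ) < a ^ 2 := by nlinarith
    have hane : a ≠ 0 := ne_of_gt ha0
    have he : a ^ 2 - 1 ≠ 0 := by nlinarith
    have hu : (1 - a ^ 2) * y ≠ 0 := by
      apply mul_ne_zero _ (ne_of_gt hy); intro h; apply he; linarith [h]
    have hvpos : (0:ℝ) < 1 - (a ^ 2)⁻¹ := by
      have : (a ^ 2)⁻¹ < 1 := by rw [inv_lt_one_iff₀]; right; exact ha2
      linarith
    have hv : (1 - (a ^ 2)⁻¹) * y ≠ 0 := by positivity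
    have hap1 : a + 1 ≠ 0 := by positivity
    rw [geom_sum_eq ha1]
    have ham1 : a - 1 ≠ 0 := sub_ne_zero.mpr ha1
    have hpm : (1 - a ^ 2) ≠ 0 := fun h => he (by linarith)
    field_simp
    ring
  have total : Tendsto (fun a : ℝ =>
      a ^ d * ((Real.exp ((1 - a ^ 2) * y) - 1 - (1 - a ^ 2) * y) / ((1 - a ^ 2) * y) ^ 2) * y ^ 2
        + (Real.exp ((1 - (a ^ 2)⁻¹) * y) - 1 - (1 - (a ^ 2)⁻¹) * y) / ((1 - (a ^ 2)⁻¹) * y) ^ 2 * (y ^ 2 / (a ^ 2) ^ 2)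
        - y * (∑ i ∈ Finset.range (d + 2), a ^ i) / ((a + 1) * a ^ 2)) (𝓝[>] (1:ℝ))
      (𝓝 (1 * (1/2) * y ^ 2 + 1/2 * (y ^ 2) - y * ((d:ℝ) + 2) / 2)) := by
    exact (((hpow.mul hQ1).mul (tendsto_const_nhds (x := y ^ 2))).add (hQ2.mul hquot)).sub hsum
  rw [Filter.tendsto_congr' heq] at total
  have hval : y ^ 2 - ((d:ℝ)/2 + 1) * y = 1 * (1/2) * y^2 + 1/2 * y^2 - y * ((d:ℝ) + 2) / 2 := by
    push_cast; ring
  rw [hval]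
  exact total
end Aux

/-- For `d ≥ 2`, if `X a` is the unique positive zero of
`H_a(X) = a^d e^{(1-a²)X} + e^{(1-a⁻²)X} - (1+a^d)` for each `a > 1`, then
`X a → d/2 + 1` as `a → 1⁺`. -/
theorem stmt_13 (d : ℕ) (hd : 2 ≤ d) (X : ℝ → ℝ)
    (hX : ∀ a : ℝ, 1 < a → 0 < X a ∧
      a ^ d * Real.exp ((1 - a ^ 2) * X a) + Real.exp ((1 - (a ^ 2)⁻¹) * X a)
        - (1 + a ^ d) = 0) :
    Filter.Tendsto X (nhdsWithin 1 (Set.Ioi 1)) (nhds ((d : ℝ) / 2 + 1)) := by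
  have hc2 : (2:ℝ) ≤ (d:ℝ)/2 + 1 := by
    have : (2:ℝ) ≤ (d:ℝ) := by exact_mod_cast hd
    linarith
  set c : ℝ := (d:ℝ)/2 + 1 with hc
  rw [Metric.tendsto_nhds]
  intro ε hε
  set ε' : ℝ := min ε 1 with hε'def
  have hε'pos : 0 < ε' := lt_min hε one_pos
  have hε'le1 : ε' ≤ 1 := min_le_right _ _
  have hε'leε : ε' ≤ ε := min_le_left _ _
  set t : ℝ := c - ε' with htdef
  set T : ℝ := c + ε' with hTdef
  have ht0 : 0 < t := by simp only [htdef]; linarith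
  have hT0 : 0 < T := by simp only [hTdef]; linarith
  have Lt := tendsto_ratio d t ht0
  have LT := tendsto_ratio d T hT0
  have hlt : t ^ 2 - c * t < 0 := by nlinarith
  have hgt : 0 < T ^ 2 - c * T := by nlinarith
  have ev1 := Lt.eventually_lt_const hlt
  have ev2 := LT.eventually_const_lt hgt
  filter_upwards [ev1, ev2, self_mem_nhdsWithin] with a hra hrb (ha : 1 < a)
  obtain ⟨hXpos, hXzero⟩ := hX a ha
  have ha2 : 1 < a ^ 2 := by nlinarith
  have hq : 0 < ((a:ℝ) ^ 2 - 1) ^ 2 := by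
    have : a ^ 2 - 1 ≠ 0 := by intro h; nlinarith
    positivity
  have hg0 : a ^ d * Real.exp ((1 - a ^ 2) * 0) + Real.exp ((1 - (a ^ 2)⁻¹) * 0)
      - (1 + a ^ d) = 0 := by
    simp only [mul_zero, Real.exp_zero, mul_one]; ring
  have trap := convex_trap (convexOn_H d a (by linarith)) hg0 hXzero hXpos
  have hHt : a ^ d * Real.exp ((1 - a ^ 2) * t) + Real.exp ((1 - (a ^ 2)⁻¹) * t)
      - (1 + a ^ d) < 0 := by
    have h := mul_neg_of_neg_of_pos hra hq
    rwa [div_mul_cancel₀ _ (ne_of_gt hq)] at h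
  have hHT : 0 < a ^ d * Real.exp ((1 - a ^ 2) * T) + Real.exp ((1 - (a ^ 2)⁻¹) * T)
      - (1 + a ^ d) := by
    have h := mul_pos hrb hq
    rwa [div_mul_cancel₀ _ (ne_of_gt hq)] at h
  have h1 : t < X a := by
    by_contra h
    push_neg at h
    exact absurd (trap.2 t h) (not_le.mpr hHt)
  have h2 : X a < T := by
    by_contra h
    push_neg at h
    exact absurd (trap.1 T hT0.le h) (not_le.mpr hHT)
  rw [Real.dist_eq, abs_sub_lt_iff]
  constructor <;> [skip; skip] <;> simp only [htdef, hTdef] at h1 h2 <;> linarith
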